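/- No fundamental element of the near-regular partial field 𝕌₁, other than 1, has the form ±α^i(1-α)^i for an integer i; that is, if ±α^i(1-α)^i is a fundamental element then it equals 1 (so i = 0 with sign +). -/

import Mathlib

/-- The transcendental element `α` of `ℚ(α)`. -/
noncomputable def nrAlpha : RatFunc ℚ := RatFunc.X

/-- The near-regular partial field `𝕌₁`, viewed as the subset
`⟨-1, α, 1-α⟩ ∪ {0}` of `ℚ(α)`. -/
def U1 : Set (RatFunc ℚ) :=
  {x | x = 0 ∨ ∃ (ε : RatFunc ℚ) (i j : ℤ),
    (ε = 1 ∨ ε = -1) ∧ x = ε * nrAlpha ^ i * (1 - nrAlpha) ^ j}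

/-- `p` is a fundamental element of `𝕌₁` if `p ∈ 𝕌₁` and `1 - p ∈ 𝕌₁`. -/
def IsFund (p : RatFunc ℚ) : Prop := p ∈ U1 ∧ (1 - p) ∈ U1

open Polynomial IsDedekindDomain IsDedekindDomain.HeightOneSpectrum Multiplicative

noncomputable instance : DecidableEq (RatFunc ℚ) := Classical.decEq _

local notation "ℤₘ₀" => WithZero (Multiplicative ℤ)

/-- The height-one prime `(X - 1)` of `ℚ[X]`. -/
noncomputable def nrIdealX1 : HeightOneSpectrum (Polynomial ℚ) where
  asIdeal := Ideal.span {Polynomial.X - Polynomial.C 1}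
  isPrime := by
    rw [Ideal.span_singleton_prime (Polynomial.X_sub_C_ne_zero 1)]
    exact Polynomial.prime_X_sub_C 1
  ne_bot := by
    rw [ne_eq, Ideal.span_singleton_eq_bot]
    exact Polynomial.X_sub_C_ne_zero 1

/-- The three valuations we use. -/
noncomputable def nrV0 : Valuation (RatFunc ℚ) ℤₘ₀ := (Polynomial.idealX ℚ).valuation (RatFunc ℚ)
noncomputable def nrV1 : Valuation (RatFunc ℚ) ℤₘ₀ := nrIdealX1.valuation (RatFunc ℚ)
noncomputable def nrVi : Valuation (RatFunc ℚ) ℤₘ₀ := RatFunc.inftyValuation ℚ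

lemma nr_intVal_eq_one (v : HeightOneSpectrum (Polynomial ℚ)) (g r : Polynomial ℚ)
    (hgen : v.asIdeal = Ideal.span {g}) (hdvd : ¬ g ∣ r) (_hr : r ≠ 0) :
    v.intValuation r = 1 := by
  refine le_antisymm (v.intValuation_le_one r) ?_
  by_contra hlt
  rw [not_le] at hlt
  have := (v.intValuation_lt_one_iff_dvd r).mp hlt
  rw [hgen, span_singleton_dvd_span_singleton_iff_dvd] at this
  exact hdvd this

lemma nrV0_X : nrV0 RatFunc.X = (ofAdd (-1 : ℤ) : Multiplicative ℤ) := by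
  rw [nrV0]
  exact Polynomial.valuation_X_eq_neg_one ℚ

lemma nrV0_omX : nrV0 (1 - RatFunc.X) = 1 := by
  have h : (1 - RatFunc.X : RatFunc ℚ) = algebraMap (Polynomial ℚ) (RatFunc ℚ)
      (1 - Polynomial.X) := by
    simp [map_sub, RatFunc.algebraMap_X]
  rw [nrV0, h, valuation_of_algebraMap]
  refine nr_intVal_eq_one _ Polynomial.X _ rfl ?_ ?_
  · rw [Polynomial.X_dvd_iff]
    simp
  · intro hc
    have := congrArg (Polynomial.coeff · 0) hc
    simp at this

lemma nrV0_two : nrV0 (2 : RatFunc ℚ) = 1 := by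
  have h : (2 : RatFunc ℚ) = algebraMap (Polynomial ℚ) (RatFunc ℚ) 2 :=
    (map_ofNat _ 2).symm
  rw [nrV0, h, valuation_of_algebraMap]
  refine nr_intVal_eq_one _ Polynomial.X _ rfl ?_ ?_
  · rw [Polynomial.X_dvd_iff]
    norm_num
  · norm_num

lemma nrV1_X : nrV1 RatFunc.X = 1 := by
  have h : (RatFunc.X : RatFunc ℚ) = algebraMap (Polynomial ℚ) (RatFunc ℚ) Polynomial.X :=
    (RatFunc.algebraMap_X).symm
  rw [nrV1, h, valuation_of_algebraMap]
  refine nr_intVal_eq_one _ (Polynomial.X - Polynomial.C 1) _ rfl ?_ Polynomial.X_ne_zero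
  rw [Polynomial.dvd_iff_isRoot]
  simp [Polynomial.IsRoot]

lemma nrV1_omX : nrV1 (1 - RatFunc.X) = (ofAdd (-1 : ℤ) : Multiplicative ℤ) := by
  have h : (1 - RatFunc.X : RatFunc ℚ) = - algebraMap (Polynomial ℚ) (RatFunc ℚ)
      (Polynomial.X - Polynomial.C 1) := by
    simp [map_sub, RatFunc.algebraMap_X]
  rw [nrV1, h, Valuation.map_neg, valuation_of_algebraMap]
  exact intValuation_singleton _ (Polynomial.X_sub_C_ne_zero 1) rfl

lemma nrV1_two : nrV1 (2 : RatFunc ℚ) = 1 := by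
  have h : (2 : RatFunc ℚ) = algebraMap (Polynomial ℚ) (RatFunc ℚ) 2 :=
    (map_ofNat _ 2).symm
  rw [nrV1, h, valuation_of_algebraMap]
  refine nr_intVal_eq_one _ (Polynomial.X - Polynomial.C 1) _ rfl ?_ ?_
  · rw [Polynomial.dvd_iff_isRoot]
    norm_num [Polynomial.IsRoot]
  · norm_num

lemma nrVi_X : nrVi RatFunc.X = (ofAdd (1 : ℤ) : Multiplicative ℤ) := by
  rw [nrVi, FunctionField.inftyValuation_apply]
  exact FunctionField.inftyValuation.X ℚ

lemma nrVi_omX : nrVi (1 - RatFunc.X) = (ofAdd (1 : ℤ) : Multiplicative ℤ) := by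
  have h : (1 - RatFunc.X : RatFunc ℚ) = algebraMap (Polynomial ℚ) (RatFunc ℚ)
      (1 - Polynomial.X) := by
    simp [map_sub, RatFunc.algebraMap_X]
  have hne : (1 - Polynomial.X : Polynomial ℚ) ≠ 0 := by
    intro hc
    have := congrArg (Polynomial.coeff · 0) hc
    simp at this
  rw [nrVi, FunctionField.inftyValuation_apply, h,
    FunctionField.inftyValuation.polynomial ℚ hne]
  congr 1
  have : (1 - Polynomial.X : Polynomial ℚ).natDegree = 1 := by
    compute_degree!
  rw [this]
  simp

/-- Value of a `±X^i (1-X)^j` monomial under a valuation with prescribed values on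
`X` and `1 - X`. -/
lemma nr_val_term (v : Valuation (RatFunc ℚ) ℤₘ₀) (p q : ℤ)
    (hX : v RatFunc.X = (ofAdd p : Multiplicative ℤ))
    (hY : v (1 - RatFunc.X) = (ofAdd q : Multiplicative ℤ))
    (ε : RatFunc ℚ) (hε : ε = 1 ∨ ε = -1) (i j : ℤ) :
    v (ε * nrAlpha ^ i * (1 - nrAlpha) ^ j) =
      (ofAdd (i * p + j * q) : Multiplicative ℤ) := by
  have hε1 : v ε = 1 := by
    rcases hε with h | h <;> subst h <;> simp
  rw [nrAlpha, map_mul, map_mul, hε1, one_mul, map_zpow₀, map_zpow₀, hX, hY,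
    ← WithZero.coe_zpow, ← WithZero.coe_zpow, ← WithZero.coe_mul,
    ← ofAdd_zsmul, ← ofAdd_zsmul, ← ofAdd_add, smul_eq_mul, smul_eq_mul]

/-- If `x + y = 1` and the valuations of `x, y` are `ofAdd s, ofAdd t`, then
`max s t ≥ 0`, with equality if `s ≠ t`. -/
lemma nr_coe_max (s t : ℤ) :
    ((ofAdd s : Multiplicative ℤ) : ℤₘ₀) ⊔ ((ofAdd t : Multiplicative ℤ) : ℤₘ₀)
      = ((ofAdd (max s t) : Multiplicative ℤ) : ℤₘ₀) := by
  rcases le_total s t with h | h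
  · rw [max_eq_right h, sup_eq_right.mpr]
    exact_mod_cast Multiplicative.ofAdd_le.mpr h
  · rw [max_eq_left h, sup_eq_left.mpr]
    exact_mod_cast Multiplicative.ofAdd_le.mpr h

lemma nr_ofAdd_coe_inj {s t : ℤ}
    (h : ((ofAdd s : Multiplicative ℤ) : ℤₘ₀) = ((ofAdd t : Multiplicative ℤ) : ℤₘ₀)) :
    s = t := by
  have h2 : (ofAdd s : Multiplicative ℤ) = ofAdd t := by exact_mod_cast h
  exact_mod_cast h2

/-- If `x + y = 1` and the valuations of `x, y` are `ofAdd s, ofAdd t`, then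
`max s t ≥ 0`, with equality if `s ≠ t`. -/
instance : CharZero (RatFunc ℚ) :=
  (RingHom.charZero_iff (algebraMap ℚ (RatFunc ℚ)).injective).mp inferInstance

lemma nr_ofAdd_coe_eq_one {s : ℤ} (h : ((ofAdd s : Multiplicative ℤ) : ℤₘ₀) = 1) : s = 0 := by
  apply nr_ofAdd_coe_inj (t := 0)
  rw [h]
  simp

lemma nr_sum_eq_one (v : Valuation (RatFunc ℚ) ℤₘ₀) (x y : RatFunc ℚ) (s t : ℤ)
    (hx : v x = (ofAdd s : Multiplicative ℤ)) (hy : v y = (ofAdd t : Multiplicative ℤ))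
    (hxy : x + y = 1) :
    0 ≤ max s t ∧ (s ≠ t → max s t = 0) := by
  have h1 : v (x + y) = 1 := by rw [hxy, map_one]
  constructor
  · have hle := v.map_add x y
    rw [h1, hx, hy, nr_coe_max] at hle
    have hle2 : ((ofAdd (0:ℤ) : Multiplicative ℤ) : ℤₘ₀) ≤ (ofAdd (max s t)) := by
      exact_mod_cast hle
    have : (ofAdd (0:ℤ)) ≤ (ofAdd (max s t)) := by exact_mod_cast hle2
    exact_mod_cast this
  · intro hst
    have hne : v x ≠ v y := by
      rw [hx, hy]
      intro hc
      exact hst (nr_ofAdd_coe_inj hc)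
    have heq := v.map_add_of_distinct_val hne
    rw [h1, hx, hy, nr_coe_max] at heq
    have : ((ofAdd (0:ℤ) : Multiplicative ℤ) : ℤₘ₀) = (ofAdd (max s t)) := by
      exact_mod_cast heq
    exact (nr_ofAdd_coe_inj this).symm

/-- No fundamental element of `𝕌₁` other than `1` has the form `±α^i (1-α)^i`:
if `±α^i (1-α)^i` is fundamental then the sign is `+` and `i = 0`, so it equals `1`. -/
theorem fundamental_not_of_form_pm_alpha_pow_eq :
    ∀ (ε : RatFunc ℚ) (i : ℤ), (ε = 1 ∨ ε = -1) →
      IsFund (ε * nrAlpha ^ i * (1 - nrAlpha) ^ i) →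
      ε = 1 ∧ i = 0 ∧ ε * nrAlpha ^ i * (1 - nrAlpha) ^ i = 1 := by
  intro ε i hε hfund
  set T1 : RatFunc ℚ := ε * nrAlpha ^ i * (1 - nrAlpha) ^ i with hT1
  -- values of T1 under the three valuations
  have hv0T1 : nrV0 T1 = (ofAdd (-i) : Multiplicative ℤ) := by
    rw [hT1, nr_val_term nrV0 (-1) 0 nrV0_X nrV0_omX ε hε i i]
    congr 1; ring_nf
  have hv1T1 : nrV1 T1 = (ofAdd (-i) : Multiplicative ℤ) := by
    rw [hT1, nr_val_term nrV1 0 (-1) nrV1_X nrV1_omX ε hε i i]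
    congr 1; ring_nf
  have hviT1 : nrVi T1 = (ofAdd (2 * i) : Multiplicative ℤ) := by
    rw [hT1, nr_val_term nrVi 1 1 nrVi_X nrVi_omX ε hε i i]
    congr 1; ring_nf
  obtain ⟨-, hU⟩ := hfund
  rcases hU with h0 | ⟨δ, a, b, hδ, hab⟩
  · -- `1 - T1 = 0`, i.e. `T1 = 1`; then `i = 0` and `ε = 1`.
    have hT1one : T1 = 1 := by linear_combination -h0
    have hv : nrV0 T1 = 1 := by rw [hT1one, map_one]
    rw [hv0T1] at hv
    have hi : (-i : ℤ) = 0 := nr_ofAdd_coe_eq_one hv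
    have hi0 : i = 0 := by omega
    rcases hε with h | h
    · exact ⟨h, hi0, hT1one⟩
    · exfalso
      rw [hT1, h, hi0] at hT1one
      norm_num at hT1one
  · -- `1 - T1 = δ X^a (1-X)^b`: always contradictory.
    exfalso
    set T2 : RatFunc ℚ := δ * nrAlpha ^ a * (1 - nrAlpha) ^ b with hT2def
    have hsum : T1 + T2 = 1 := by rw [← hab]; ring
    have hv0T2 : nrV0 T2 = (ofAdd (-a) : Multiplicative ℤ) := by
      rw [hT2def, nr_val_term nrV0 (-1) 0 nrV0_X nrV0_omX δ hδ a b]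
      congr 1; ring_nf
    have hv1T2 : nrV1 T2 = (ofAdd (-b) : Multiplicative ℤ) := by
      rw [hT2def, nr_val_term nrV1 0 (-1) nrV1_X nrV1_omX δ hδ a b]
      congr 1; ring_nf
    have hviT2 : nrVi T2 = (ofAdd (a + b) : Multiplicative ℤ) := by
      rw [hT2def, nr_val_term nrVi 1 1 nrVi_X nrVi_omX δ hδ a b]
      congr 1; ring_nf
    have H0 := nr_sum_eq_one nrV0 T1 T2 (-i) (-a) hv0T1 hv0T2 hsum
    have H1 := nr_sum_eq_one nrV1 T1 T2 (-i) (-b) hv1T1 hv1T2 hsum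
    have Hi := nr_sum_eq_one nrVi T1 T2 (2*i) (a+b) hviT1 hviT2 hsum
    rcases lt_trichotomy i 0 with hi | hi | hi
    · -- i < 0: forces a = i, b = i, then the ∞-valuation gives a contradiction
      have ha : a = i := by
        by_contra hne
        have := H0.2 (by omega)
        omega
      have hb : b = i := by
        by_contra hne
        have := H1.2 (by omega)
        omega
      subst ha; subst hb
      have := Hi.1
      omega
    · -- i = 0: T1 = ±1; forces T2 = 0 or T2 = 2, both impossible
      subst hi
      simp only [zpow_zero, mul_one] at hT1
      rcases hε with h | h
      · -- T1 = 1, so T2 = 0, but T2 has nonzero valuation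
        rw [hT1, h] at hsum
        have hT2zero : T2 = 0 := by
          have := hsum
          rwa [add_eq_left] at this
        rw [hT2zero, map_zero] at hv0T2
        exact (WithZero.coe_ne_zero (a := ofAdd (-a))) hv0T2.symm
      · -- T1 = -1, so T2 = 2; valuations force a = b = 0, then δ = 2, absurd
        rw [hT1, h] at hsum
        have hT2two : T2 = 2 := by linear_combination hsum
        have ha : a = 0 := by
          rw [hT2two, nrV0_two] at hv0T2
          have := nr_ofAdd_coe_eq_one hv0T2.symm
          omega
        have hb : b = 0 := by
          rw [hT2two, nrV1_two] at hv1T2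
          have := nr_ofAdd_coe_eq_one hv1T2.symm
          omega
        subst ha; subst hb
        rw [hT2def] at hT2two
        simp only [zpow_zero, mul_one] at hT2two
        rcases hδ with h' | h' <;> rw [h'] at hT2two <;> norm_num at hT2two
    · -- i > 0: forces a = 0, b = 0, then the ∞-valuation gives a contradiction
      have ha : a = 0 := by
        by_contra hne
        have := H0.2 (by omega)
        omega
      have hb : b = 0 := by
        by_contra hne
        have := H1.2 (by omega)
        omega
      subst ha; subst hb
      have := Hi.2 (by omega)
      omega
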